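/- Key inequality in the proof of sample-level pruning. Let o_x be an imputed object with instances x₁,…,x_n in d-dimensional Euclidean space and nonnegative probabilities p₁,…,p_n with Σ_l p_l = 1, and let o_y be an imputed object with instances y₁,…,y_m and nonnegative probabilities q₁,…,q_m with Σ_g q_g = 1. Let S_x ⊆ {1,…,n} and S_y ⊆ {1,…,m} be index subsets, and set β_x = Σ_{l ∈ S_x} p_l and β_y = Σ_{g ∈ S_y} q_g. If dist(x_l, y_g) > ε for every l ∈ S_x and every g ∈ S_y, then Pr_Join(o_x, o_y, ε) ≤ 1 − β_x · β_y. -/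
import Mathlib


/-- key inequality in the proof of sample-level pruning: if all pairs of
instances indexed by `S_x × S_y` are more than `ε` apart, then the join probability is
at most `1 - β_x · β_y` where `β_x = Σ_{l ∈ S_x} p_l` and `β_y = Σ_{g ∈ S_y} q_g`. -/
theorem sample_level_key_inequality
    (d n m : ℕ)
    (x : Fin n → EuclideanSpace ℝ (Fin d)) (p : Fin n → ℝ)
    (y : Fin m → EuclideanSpace ℝ (Fin d)) (q : Fin m → ℝ)
    (hp : ∀ l, 0 ≤ p l) (hps : ∑ l, p l = 1)
    (hq : ∀ g, 0 ≤ q g) (hqs : ∑ g, q g = 1)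
    (Sx : Finset (Fin n)) (Sy : Finset (Fin m))
    (ε : ℝ) (hε : 0 ≤ ε)
    (hsep : ∀ l ∈ Sx, ∀ g ∈ Sy, ε < dist (x l) (y g)) :
    (∑ l, ∑ g, p l * q g * (if dist (x l) (y g) ≤ ε then (1 : ℝ) else 0)) ≤
      1 - (∑ l ∈ Sx, p l) * (∑ g ∈ Sy, q g) := by
  have key : ∀ l g, p l * q g * (if dist (x l) (y g) ≤ ε then (1:ℝ) else 0)
      ≤ p l * q g - p l * q g * (if l ∈ Sx ∧ g ∈ Sy then (1:ℝ) else 0) := by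
    intro l g
    have hpq : 0 ≤ p l * q g := mul_nonneg (hp l) (hq g)
    by_cases h : l ∈ Sx ∧ g ∈ Sy
    · have hd := hsep l h.1 g h.2
      simp [h, not_le.mpr hd]
    · simp only [h, if_neg, if_false, mul_zero, sub_zero]
      split
      · simp
      · simpa using hpq
  calc (∑ l, ∑ g, p l * q g * (if dist (x l) (y g) ≤ ε then (1 : ℝ) else 0))
      ≤ ∑ l, ∑ g, (p l * q g - p l * q g * (if l ∈ Sx ∧ g ∈ Sy then (1:ℝ) else 0)) :=
        Finset.sum_le_sum fun l _ => Finset.sum_le_sum fun g _ => key l g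
    _ = 1 - (∑ l ∈ Sx, p l) * (∑ g ∈ Sy, q g) := by
        have h1 : (∑ l, ∑ g, p l * q g) = 1 := by
          rw [← Finset.sum_mul_sum, hps, hqs]; norm_num
        have hx : ∑ l, p l * (if l ∈ Sx then (1:ℝ) else 0) = ∑ l ∈ Sx, p l := by
          simp [mul_ite, mul_one, mul_zero, Finset.sum_ite_mem]
        have hy : ∑ g, q g * (if g ∈ Sy then (1:ℝ) else 0) = ∑ g ∈ Sy, q g := by
          simp [mul_ite, mul_one, mul_zero, Finset.sum_ite_mem]
        have h2 : (∑ l, ∑ g, p l * q g * (if l ∈ Sx ∧ g ∈ Sy then (1:ℝ) else 0))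
            = (∑ l ∈ Sx, p l) * (∑ g ∈ Sy, q g) := by
          have : (∑ l, ∑ g, p l * q g * (if l ∈ Sx ∧ g ∈ Sy then (1:ℝ) else 0))
              = ∑ l, ∑ g, (p l * (if l ∈ Sx then (1:ℝ) else 0)) *
                  (q g * (if g ∈ Sy then (1:ℝ) else 0)) := by
            refine Finset.sum_congr rfl fun l _ => Finset.sum_congr rfl fun g _ => ?_
            by_cases hl : l ∈ Sx <;> by_cases hg : g ∈ Sy <;> simp [hl, hg] <;> ring
          rw [this, ← Finset.sum_mul_sum, hx, hy]
        simp only [Finset.sum_sub_distrib]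
        rw [h1, h2]
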